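/- In the abstract Pestov setup, the four hypotheses X* = -X, [X,V] = -H, [X,H] = RV, and H*V - V*H = -(n-1)X imply, purely algebraically: X*V*VX - V*X*XV = [X*,V*]VX - V*X*[X,V] = H*VX - V*XH = (H*V - V*H)X - V*[X,H] = -(n-1)X² - V*RV, and hence (using X* = -X) equals (n-1)X*X - V*RV. -/
import Mathlib


open scoped InnerProductSpace

/-- The chain of five operator-algebra equalities in the proof of the pointwise
Pestov identity. -/
theorem stmt18 {E : Type*} [NormedAddCommGroup E] [InnerProductSpace ℂ E]
    (n : ℕ) (X V H R Xs Vs Hs : E →ₗ[ℂ] E)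
    (hXadj : ∀ u v : E, ⟪X u, v⟫_ℂ = ⟪u, Xs v⟫_ℂ)
    (hXs : Xs = -X)
    (hVadj : ∀ u v : E, ⟪V u, v⟫_ℂ = ⟪u, Vs v⟫_ℂ)
    (hHadj : ∀ u v : E, ⟪H u, v⟫_ℂ = ⟪u, Hs v⟫_ℂ)
    (hH : H = -(X ∘ₗ V - V ∘ₗ X))
    (hXH : X ∘ₗ H - H ∘ₗ X = R ∘ₗ V)
    (hHV : Hs ∘ₗ V - Vs ∘ₗ H = (-((n : ℂ) - 1)) • X) :
    (Xs ∘ₗ Vs ∘ₗ V ∘ₗ X - Vs ∘ₗ Xs ∘ₗ X ∘ₗ V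
        = (Xs ∘ₗ Vs - Vs ∘ₗ Xs) ∘ₗ (V ∘ₗ X) - (Vs ∘ₗ Xs) ∘ₗ (X ∘ₗ V - V ∘ₗ X)) ∧
    ((Xs ∘ₗ Vs - Vs ∘ₗ Xs) ∘ₗ (V ∘ₗ X) - (Vs ∘ₗ Xs) ∘ₗ (X ∘ₗ V - V ∘ₗ X)
        = Hs ∘ₗ V ∘ₗ X - Vs ∘ₗ X ∘ₗ H) ∧
    (Hs ∘ₗ V ∘ₗ X - Vs ∘ₗ X ∘ₗ H
        = (Hs ∘ₗ V - Vs ∘ₗ H) ∘ₗ X - Vs ∘ₗ (X ∘ₗ H - H ∘ₗ X)) ∧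
    ((Hs ∘ₗ V - Vs ∘ₗ H) ∘ₗ X - Vs ∘ₗ (X ∘ₗ H - H ∘ₗ X)
        = (-((n : ℂ) - 1)) • (X ∘ₗ X) - Vs ∘ₗ R ∘ₗ V) ∧
    ((-((n : ℂ) - 1)) • (X ∘ₗ X) - Vs ∘ₗ R ∘ₗ V
        = ((n : ℂ) - 1) • (Xs ∘ₗ X) - Vs ∘ₗ R ∘ₗ V) := by
  have hHs : Hs = Xs ∘ₗ Vs - Vs ∘ₗ Xs := by
    ext v
    apply ext_inner_left ℂ
    intro u
    rw [← hHadj]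
    have : H u = V (X u) - X (V u) := by rw [hH]; simp
    rw [this]
    simp only [inner_sub_left, LinearMap.sub_apply, LinearMap.comp_apply,
      inner_sub_right, hXadj, hVadj]
  refine ⟨?_, ?_, ?_, ?_, ?_⟩
  · ext x; simp only [LinearMap.sub_apply, LinearMap.comp_apply, map_sub]; abel
  · rw [hHs, hH, hXs]
    ext x
    simp only [LinearMap.sub_apply, LinearMap.comp_apply, LinearMap.neg_apply, map_sub, map_neg]
    abel
  · ext x; simp only [LinearMap.sub_apply, LinearMap.comp_apply, map_sub]; abel
  · rw [hHV, hXH]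
    ext x
    simp only [LinearMap.sub_apply, LinearMap.comp_apply, LinearMap.smul_apply, map_smul]
  · rw [hXs]
    ext x
    simp only [LinearMap.sub_apply, LinearMap.comp_apply, LinearMap.smul_apply,
      LinearMap.neg_apply, smul_neg, neg_smul]
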